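/- An ε-dense partial Sudoku S of type (h,w) has the (1−3ε)-availability property: every edge of G_S is contained in at least (1−3ε)n tiles of G_S. -/

import Mathlib

open Matrix Finset

section Helpers

lemma fiber_card_le (a b c : ℕ) (hb : 0 < b) :
    (Finset.univ.filter fun j : Fin a => (j : ℕ) / b = c).card ≤ b := by
  have key : (Finset.univ.filter fun j : Fin a => (j : ℕ) / b = c).card
      ≤ (Finset.univ : Finset (Fin b)).card := by
    apply Finset.card_le_card_of_injOn (fun j => ⟨(j : ℕ) % b, Nat.mod_lt _ hb⟩)
    · intro x _; exact Finset.mem_univ _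
    · intro x hx y hy hxy
      rw [Finset.mem_coe, Finset.mem_filter] at hx hy
      have hv : (x : ℕ) % b = (y : ℕ) % b := by
        have := congrArg Fin.val hxy
        simpa using this
      have hx2 := Nat.div_add_mod (x : ℕ) b
      have hy2 := Nat.div_add_mod (y : ℕ) b
      have hc1 : (x : ℕ) / b = c := hx.2
      have hc2 : (y : ℕ) / b = c := hy.2
      rw [hc1] at hx2
      rw [hc2] at hy2
      exact Fin.ext (by omega)
  simpa using key

lemma occ_le {α : Type*} (T : Finset α) (g : α → ℕ) (w : ℕ)
    (hg : ∀ q ∈ T, g q < w) (c : ℝ)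
    (hc : ∀ p < w, ((T.filter fun q => g q = p).card : ℝ) ≤ c) :
    (T.card : ℝ) ≤ w * c := by
  classical
  have hsub : T ⊆ (Finset.range w).biUnion (fun p => T.filter fun q => g q = p) := by
    intro q hq
    exact Finset.mem_biUnion.2 ⟨g q, Finset.mem_range.2 (hg q hq),
      Finset.mem_filter.2 ⟨hq, rfl⟩⟩
  have h1 : T.card ≤ ∑ p ∈ Finset.range w, (T.filter fun q => g q = p).card :=
    le_trans (Finset.card_le_card hsub) Finset.card_biUnion_le
  calc (T.card : ℝ) ≤ ∑ p ∈ Finset.range w, ((T.filter fun q => g q = p).card : ℝ) := by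
        exact_mod_cast h1
    _ ≤ ∑ p ∈ Finset.range w, c := Finset.sum_le_sum fun p hp => hc p (Finset.mem_range.1 hp)
    _ = w * c := by rw [Finset.sum_const, Finset.card_range, nsmul_eq_mul]

lemma card_le_biUnion_bound {α β : Type*} [DecidableEq α] (s : Finset α) (t : Finset β)
    (f : β → Finset α) (m : ℕ)
    (hsub : s ⊆ t.biUnion f) (hm : ∀ b ∈ t, (f b).card ≤ m) : s.card ≤ t.card * m := by
  calc s.card ≤ (t.biUnion f).card := Finset.card_le_card hsub
    _ ≤ ∑ b ∈ t, (f b).card := Finset.card_biUnion_le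
    _ ≤ ∑ _b ∈ t, m := Finset.sum_le_sum hm
    _ = t.card * m := by rw [Finset.sum_const, smul_eq_mul]

end Helpers


/-- The (0-indexed) box containing cell `(i,j)` in a Sudoku grid of type `(h,w)`. -/
def box0 (h w : ℕ) (i j : Fin (h * w)) : Fin (h * w) :=
  ⟨h * ((i : ℕ) / h) + (j : ℕ) / w, by
    have hh : 0 < h := by
      rcases Nat.eq_zero_or_pos h with h0 | h0
      · exact absurd i.2 (by simp [h0])
      · exact h0
    have hw : 0 < w := by
      rcases Nat.eq_zero_or_pos w with h0 | h0
      · exact absurd i.2 (by simp [h0, Nat.mul_zero])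
      · exact h0
    have h1 : (i : ℕ) / h < w := Nat.div_lt_of_lt_mul i.2
    have h2 : (j : ℕ) / w < h := Nat.div_lt_of_lt_mul (lt_of_lt_of_eq j.2 (Nat.mul_comm h w))
    calc h * ((i : ℕ) / h) + (j : ℕ) / w < h * ((i : ℕ) / h) + h := by omega
      _ = h * ((i : ℕ) / h + 1) := by ring
      _ ≤ h * w := Nat.mul_le_mul_left h h1⟩

lemma box0_div (h w : ℕ) (hh : 0 < h) (i j : Fin (h * w)) :
    ((box0 h w i j : ℕ)) / h = (i : ℕ) / h := by
  have h2 : (j : ℕ) / w < h := Nat.div_lt_of_lt_mul (lt_of_lt_of_eq j.2 (Nat.mul_comm h w))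
  show (h * ((i : ℕ) / h) + (j : ℕ) / w) / h = (i : ℕ) / h
  rw [Nat.mul_add_div hh, Nat.div_eq_of_lt h2, Nat.add_zero]

lemma box0_mod (h w : ℕ) (i j : Fin (h * w)) :
    ((box0 h w i j : ℕ)) % h = (j : ℕ) / w := by
  have h2 : (j : ℕ) / w < h := Nat.div_lt_of_lt_mul (lt_of_lt_of_eq j.2 (Nat.mul_comm h w))
  show (h * ((i : ℕ) / h) + (j : ℕ) / w) % h = (j : ℕ) / w
  rw [Nat.mul_add_mod, Nat.mod_eq_of_lt h2]

lemma box0_eq_iff (h w : ℕ) (hh : 0 < h) (i j i' j' : Fin (h * w)) :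
    box0 h w i' j' = box0 h w i j ↔
      (i' : ℕ) / h = (i : ℕ) / h ∧ (j' : ℕ) / w = (j : ℕ) / w := by
  constructor
  · intro he
    have h1 := box0_div h w hh i j
    have h2 := box0_mod h w i j
    have h3 := box0_div h w hh i' j'
    have h4 := box0_mod h w i' j'
    rw [he] at h3 h4
    exact ⟨h3 ▸ h1, h4 ▸ h2⟩
  · rintro ⟨e1, e2⟩
    apply Fin.ext
    show h * ((i' : ℕ) / h) + (j' : ℕ) / w = h * ((i : ℕ) / h) + (j : ℕ) / w
    rw [e1, e2]

/-- Edges of the Sudoku graph `G_{hw}`: row-column, row-symbol, column-symbol,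
and box-symbol pairs (in this order). -/
abbrev SEdge (h w : ℕ) :=
  (Fin (h * w) × Fin (h * w)) ⊕ (Fin (h * w) × Fin (h * w)) ⊕
  (Fin (h * w) × Fin (h * w)) ⊕ (Fin (h * w) × Fin (h * w))

/-- The `{0,1}` incidence matrix of edges versus tiles of `G_{hw}`; a tile is
indexed by `(i,j,k)` (row, column, symbol) and consists of the four edges
`r_i c_j, r_i s_k, c_j s_k, b_ℓ s_k` where `ℓ = box0 h w i j`. -/
def Wmat (h w : ℕ) : Matrix (SEdge h w) (Fin (h * w) × Fin (h * w) × Fin (h * w)) ℝ :=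
  fun e t => match e with
  | Sum.inl (i, j) => if t.1 = i ∧ t.2.1 = j then 1 else 0
  | Sum.inr (Sum.inl (i, k)) => if t.1 = i ∧ t.2.2 = k then 1 else 0
  | Sum.inr (Sum.inr (Sum.inl (j, k))) => if t.2.1 = j ∧ t.2.2 = k then 1 else 0
  | Sum.inr (Sum.inr (Sum.inr (l, k))) => if box0 h w t.1 t.2.1 = l ∧ t.2.2 = k then 1 else 0

/-- A tile `(i,j,k)` of `G_S`: all four of its edges survive in `G_S`, i.e.
cell `(i,j)` is empty and symbol `k` is missing from row `i`, column `j`,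
and the box containing `(i,j)`. -/
def FreeTile (h w : ℕ) (S : Fin (h * w) → Fin (h * w) → Option (Fin (h * w)))
    (i j k : Fin (h * w)) : Prop :=
  S i j = none ∧ (∀ j', S i j' ≠ some k) ∧ (∀ i', S i' j ≠ some k) ∧
    (∀ i' j', box0 h w i' j' = box0 h w i j → S i' j' ≠ some k)

instance (h w : ℕ) (S : Fin (h * w) → Fin (h * w) → Option (Fin (h * w)))
    (i j k : Fin (h * w)) : Decidable (FreeTile h w S i j k) := by
  unfold FreeTile; infer_instance

/-- An `ε`-dense partial Sudoku has the `(1-3ε)`-availability property: every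
surviving edge of `G_S` lies in at least `(1-3ε)n` tiles of `G_S`. -/
theorem eps_dense_availability (h w : ℕ) (hh : 2 ≤ h) (hww : 2 ≤ w) (ε : ℝ)
    (S : Fin (h * w) → Fin (h * w) → Option (Fin (h * w)))
    -- `S` is a partial Sudoku: no symbol repeats in a row, column, or box
    (hrowinj : ∀ i j₁ j₂ k, S i j₁ = some k → S i j₂ = some k → j₁ = j₂)
    (hcolinj : ∀ i₁ i₂ j k, S i₁ j = some k → S i₂ j = some k → i₁ = i₂)
    (hboxinj : ∀ i₁ j₁ i₂ j₂ k, box0 h w i₁ j₁ = box0 h w i₂ j₂ →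
      S i₁ j₁ = some k → S i₂ j₂ = some k → i₁ = i₂ ∧ j₁ = j₂)
    -- each row, column and box has at most `ε n` filled cells
    (hrow : ∀ i, ((Finset.univ.filter fun j => S i j ≠ none).card : ℝ) ≤ ε * (h * w))
    (hcol : ∀ j, ((Finset.univ.filter fun i => S i j ≠ none).card : ℝ) ≤ ε * (h * w))
    (hbox : ∀ l, ((Finset.univ.filter fun p : Fin (h * w) × Fin (h * w) =>
        box0 h w p.1 p.2 = l ∧ S p.1 p.2 ≠ none).card : ℝ) ≤ ε * (h * w))
    -- each symbol occurs at most `ε h` times in any row bundle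
    (hsymrow : ∀ k : Fin (h * w), ∀ p < w,
      ((Finset.univ.filter fun q : Fin (h * w) × Fin (h * w) =>
        (q.1 : ℕ) / h = p ∧ S q.1 q.2 = some k).card : ℝ) ≤ ε * h)
    -- and at most `ε w` times in any column bundle
    (hsymcol : ∀ k : Fin (h * w), ∀ p < h,
      ((Finset.univ.filter fun q : Fin (h * w) × Fin (h * w) =>
        (q.2 : ℕ) / w = p ∧ S q.1 q.2 = some k).card : ℝ) ≤ ε * w) :
    -- row-column edges
    (∀ i j, S i j = none →
      (1 - 3 * ε) * (h * w) ≤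
        ((Finset.univ.filter fun k => FreeTile h w S i j k).card : ℝ)) ∧
    -- row-symbol edges
    (∀ i k, (∀ j, S i j ≠ some k) →
      (1 - 3 * ε) * (h * w) ≤
        ((Finset.univ.filter fun j => FreeTile h w S i j k).card : ℝ)) ∧
    -- column-symbol edges
    (∀ j k, (∀ i, S i j ≠ some k) →
      (1 - 3 * ε) * (h * w) ≤
        ((Finset.univ.filter fun i => FreeTile h w S i j k).card : ℝ)) ∧
    -- box-symbol edges
    (∀ l k, (∀ i j, box0 h w i j = l → S i j ≠ some k) →
      (1 - 3 * ε) * (h * w) ≤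
        ((Finset.univ.filter fun p : Fin (h * w) × Fin (h * w) =>
          box0 h w p.1 p.2 = l ∧ FreeTile h w S p.1 p.2 k).card : ℝ)) := by
    classical
  have hh0 : 0 < h := by omega
  have hw0 : 0 < w := by omega
  refine ⟨?_, ?_, ?_, ?_⟩
  · -- row-column edges
    intro i j hij
    set B1 := Finset.univ.filter (fun k : Fin (h * w) => ∃ j', S i j' = some k) with hB1
    set B2 := Finset.univ.filter (fun k : Fin (h * w) => ∃ i', S i' j = some k) with hB2
    set B3 := Finset.univ.filter (fun k : Fin (h * w) =>
      ∃ i' j', box0 h w i' j' = box0 h w i j ∧ S i' j' = some k) with hB3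
    have hb1 : (B1.card : ℝ) ≤ ε * (h * w) := by
      refine le_trans ?_ (hrow i)
      have key : B1.card ≤ (Finset.univ.filter fun j' => S i j' ≠ none).card := by
        apply Finset.card_le_card_of_surjOn (fun j' => (S i j').getD i)
        intro k hk
        rw [Finset.mem_coe, hB1, Finset.mem_filter] at hk
        obtain ⟨j', hj'⟩ := hk.2
        refine ⟨j', ?_, ?_⟩
        · rw [Finset.mem_coe, Finset.mem_filter]
          exact ⟨Finset.mem_univ _, by simp [hj']⟩
        · simp [hj']
      exact_mod_cast key
    have hb2 : (B2.card : ℝ) ≤ ε * (h * w) := by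
      refine le_trans ?_ (hcol j)
      have key : B2.card ≤ (Finset.univ.filter fun i' => S i' j ≠ none).card := by
        apply Finset.card_le_card_of_surjOn (fun i' => (S i' j).getD i)
        intro k hk
        rw [Finset.mem_coe, hB2, Finset.mem_filter] at hk
        obtain ⟨i', hi'⟩ := hk.2
        refine ⟨i', ?_, ?_⟩
        · rw [Finset.mem_coe, Finset.mem_filter]
          exact ⟨Finset.mem_univ _, by simp [hi']⟩
        · simp [hi']
      exact_mod_cast key
    have hb3 : (B3.card : ℝ) ≤ ε * (h * w) := by
      refine le_trans ?_ (hbox (box0 h w i j))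
      have key : B3.card ≤ (Finset.univ.filter fun p : Fin (h * w) × Fin (h * w) =>
          box0 h w p.1 p.2 = box0 h w i j ∧ S p.1 p.2 ≠ none).card := by
        apply Finset.card_le_card_of_surjOn (fun p => (S p.1 p.2).getD i)
        intro k hk
        rw [Finset.mem_coe, hB3, Finset.mem_filter] at hk
        obtain ⟨i', j', he, hs⟩ := hk.2
        refine ⟨(i', j'), ?_, ?_⟩
        · rw [Finset.mem_coe, Finset.mem_filter]
          exact ⟨Finset.mem_univ _, he, by simp [hs]⟩
        · simp [hs]
      exact_mod_cast key
    have hsplit := Finset.card_filter_add_card_filter_not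
      (s := (Finset.univ : Finset (Fin (h * w)))) (p := fun k => FreeTile h w S i j k)
    have hbadsub : (Finset.univ.filter fun k : Fin (h * w) => ¬ FreeTile h w S i j k)
        ⊆ B1 ∪ B2 ∪ B3 := by
      intro k hk
      have hk' : ¬ FreeTile h w S i j k := (Finset.mem_filter.1 hk).2
      rw [Finset.mem_union, Finset.mem_union, hB1, hB2, hB3]
      simp only [Finset.mem_filter, Finset.mem_univ, true_and]
      by_contra hcon
      push_neg at hcon
      obtain ⟨⟨h1, h2⟩, h3⟩ := hcon
      exact hk' ⟨hij, h1, h2, h3⟩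
    have hbad : (Finset.univ.filter fun k : Fin (h * w) => ¬ FreeTile h w S i j k).card
        ≤ B1.card + B2.card + B3.card :=
      le_trans (Finset.card_le_card hbadsub)
        (le_trans (Finset.card_union_le _ _)
          (add_le_add_left (Finset.card_union_le _ _) _))
    have e1 : (Finset.univ.filter fun k : Fin (h * w) => FreeTile h w S i j k).card
        + (Finset.univ.filter fun k : Fin (h * w) => ¬ FreeTile h w S i j k).card = h * w := by
      rw [hsplit, Finset.card_univ, Fintype.card_fin]
    have e2 : (h : ℝ) * w ≤
        ((Finset.univ.filter fun k => FreeTile h w S i j k).card : ℝ)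
        + ((B1.card : ℝ) + B2.card + B3.card) := by
      have hc : ((Finset.univ.filter fun k : Fin (h * w) => FreeTile h w S i j k).card : ℝ)
          + ((Finset.univ.filter fun k : Fin (h * w) => ¬ FreeTile h w S i j k).card : ℝ)
          = (h : ℝ) * w := by exact_mod_cast congrArg (Nat.cast : ℕ → ℝ) e1
      have hb : ((Finset.univ.filter fun k : Fin (h * w) => ¬ FreeTile h w S i j k).card : ℝ)
          ≤ (B1.card : ℝ) + B2.card + B3.card := by exact_mod_cast hbad
      linarith
    have e3 : (1 - 3 * ε) * ((h : ℝ) * w) = (h : ℝ) * w - 3 * (ε * ((h : ℝ) * w)) := by ring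
    linarith
  · -- row-symbol edges
    intro i k hk
    have hib : (i : ℕ) / h < w := Nat.div_lt_of_lt_mul i.2
    set B1 := Finset.univ.filter (fun j' : Fin (h * w) => S i j' ≠ none) with hB1
    set B2 := Finset.univ.filter (fun j' : Fin (h * w) => ∃ i', S i' j' = some k) with hB2
    set B3 := Finset.univ.filter (fun j' : Fin (h * w) =>
      ∃ i'' j'', box0 h w i'' j'' = box0 h w i j' ∧ S i'' j'' = some k) with hB3
    have hb1 : (B1.card : ℝ) ≤ ε * (h * w) := by rw [hB1]; exact hrow i
    have hb2 : (B2.card : ℝ) ≤ ε * (h * w) := by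
      have key : B2.card ≤ (Finset.univ.filter fun q : Fin (h * w) × Fin (h * w) =>
          S q.1 q.2 = some k).card := by
        apply Finset.card_le_card_of_surjOn (fun q => q.2)
        intro j' hj'
        rw [Finset.mem_coe, hB2, Finset.mem_filter] at hj'
        obtain ⟨i', hi'⟩ := hj'.2
        exact ⟨(i', j'), by
          rw [Finset.mem_coe, Finset.mem_filter]; exact ⟨Finset.mem_univ _, hi'⟩, rfl⟩
      have htot : ((Finset.univ.filter fun q : Fin (h * w) × Fin (h * w) =>
          S q.1 q.2 = some k).card : ℝ) ≤ w * (ε * h) := by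
        apply occ_le _ (fun q => (q.1 : ℕ) / h) w
        · intro q _
          exact Nat.div_lt_of_lt_mul q.1.2
        · intro p hp
          have hset : ((Finset.univ.filter fun q : Fin (h * w) × Fin (h * w) =>
              S q.1 q.2 = some k).filter fun q => (q.1 : ℕ) / h = p)
              = Finset.univ.filter fun q : Fin (h * w) × Fin (h * w) =>
                (q.1 : ℕ) / h = p ∧ S q.1 q.2 = some k := by
            rw [Finset.filter_filter]
            ext q
            simp only [Finset.mem_filter, Finset.mem_univ, true_and]
            tauto
          rw [hset]
          exact hsymrow k p hp
      calc (B2.card : ℝ) ≤ ((Finset.univ.filter fun q : Fin (h * w) × Fin (h * w) =>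
            S q.1 q.2 = some k).card : ℝ) := by exact_mod_cast key
        _ ≤ w * (ε * h) := htot
        _ = ε * ((h : ℝ) * w) := by ring
    have hb3 : (B3.card : ℝ) ≤ ε * (h * w) := by
      have key : B3.card ≤ (Finset.univ.filter fun q : Fin (h * w) × Fin (h * w) =>
          (q.1 : ℕ) / h = (i : ℕ) / h ∧ S q.1 q.2 = some k).card * w := by
        apply card_le_biUnion_bound _ _ (fun q : Fin (h * w) × Fin (h * w) =>
          Finset.univ.filter fun j' : Fin (h * w) => (j' : ℕ) / w = (q.2 : ℕ) / w) w
        · intro j' hj'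
          rw [hB3, Finset.mem_filter] at hj'
          obtain ⟨i'', j'', he, hs⟩ := hj'.2
          rw [box0_eq_iff h w hh0] at he
          refine Finset.mem_biUnion.2 ⟨(i'', j''), ?_, ?_⟩
          · exact Finset.mem_filter.2 ⟨Finset.mem_univ _, he.1, hs⟩
          · exact Finset.mem_filter.2 ⟨Finset.mem_univ _, he.2.symm⟩
        · intro q _
          exact fiber_card_le (h * w) w _ hw0
      have hU := hsymrow k ((i : ℕ) / h) hib
      have key' : (B3.card : ℝ) ≤ ((Finset.univ.filter fun q : Fin (h * w) × Fin (h * w) =>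
          (q.1 : ℕ) / h = (i : ℕ) / h ∧ S q.1 q.2 = some k).card : ℝ) * w := by
        exact_mod_cast key
      calc (B3.card : ℝ) ≤ _ := key'
        _ ≤ (ε * h) * w := by
          apply mul_le_mul_of_nonneg_right hU (by positivity)
        _ = ε * ((h : ℝ) * w) := by ring
    have hsplit := Finset.card_filter_add_card_filter_not
      (s := (Finset.univ : Finset (Fin (h * w)))) (p := fun j' => FreeTile h w S i j' k)
    have hbadsub : (Finset.univ.filter fun j' : Fin (h * w) => ¬ FreeTile h w S i j' k)
        ⊆ B1 ∪ B2 ∪ B3 := by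
      intro j' hj'
      have hf : ¬ FreeTile h w S i j' k := (Finset.mem_filter.1 hj').2
      rw [Finset.mem_union, Finset.mem_union, hB1, hB2, hB3]
      simp only [Finset.mem_filter, Finset.mem_univ, true_and]
      by_contra hcon
      push_neg at hcon
      obtain ⟨⟨h1, h2⟩, h3⟩ := hcon
      exact hf ⟨h1, hk, h2, h3⟩
    have hbad : (Finset.univ.filter fun j' : Fin (h * w) => ¬ FreeTile h w S i j' k).card
        ≤ B1.card + B2.card + B3.card :=
      le_trans (Finset.card_le_card hbadsub)
        (le_trans (Finset.card_union_le _ _)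
          (add_le_add_left (Finset.card_union_le _ _) _))
    have e1 : (Finset.univ.filter fun j' : Fin (h * w) => FreeTile h w S i j' k).card
        + (Finset.univ.filter fun j' : Fin (h * w) => ¬ FreeTile h w S i j' k).card = h * w := by
      rw [hsplit, Finset.card_univ, Fintype.card_fin]
    have e2 : (h : ℝ) * w ≤
        ((Finset.univ.filter fun j' => FreeTile h w S i j' k).card : ℝ)
        + ((B1.card : ℝ) + B2.card + B3.card) := by
      have hc : ((Finset.univ.filter fun j' : Fin (h * w) => FreeTile h w S i j' k).card : ℝ)
          + ((Finset.univ.filter fun j' : Fin (h * w) => ¬ FreeTile h w S i j' k).card : ℝ)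
          = (h : ℝ) * w := by exact_mod_cast congrArg (Nat.cast : ℕ → ℝ) e1
      have hb : ((Finset.univ.filter fun j' : Fin (h * w) => ¬ FreeTile h w S i j' k).card : ℝ)
          ≤ (B1.card : ℝ) + B2.card + B3.card := by exact_mod_cast hbad
      linarith
    have e3 : (1 - 3 * ε) * ((h : ℝ) * w) = (h : ℝ) * w - 3 * (ε * ((h : ℝ) * w)) := by ring
    linarith
  · -- column-symbol edges
    intro j k hk
    have hjb : (j : ℕ) / w < h := Nat.div_lt_of_lt_mul (lt_of_lt_of_eq j.2 (Nat.mul_comm h w))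
    set B1 := Finset.univ.filter (fun i' : Fin (h * w) => S i' j ≠ none) with hB1
    set B2 := Finset.univ.filter (fun i' : Fin (h * w) => ∃ j', S i' j' = some k) with hB2
    set B3 := Finset.univ.filter (fun i' : Fin (h * w) =>
      ∃ i'' j'', box0 h w i'' j'' = box0 h w i' j ∧ S i'' j'' = some k) with hB3
    have hb1 : (B1.card : ℝ) ≤ ε * (h * w) := by rw [hB1]; exact hcol j
    have hb2 : (B2.card : ℝ) ≤ ε * (h * w) := by
      have key : B2.card ≤ (Finset.univ.filter fun q : Fin (h * w) × Fin (h * w) =>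
          S q.1 q.2 = some k).card := by
        apply Finset.card_le_card_of_surjOn (fun q => q.1)
        intro i' hi'
        rw [Finset.mem_coe, hB2, Finset.mem_filter] at hi'
        obtain ⟨j', hj'⟩ := hi'.2
        exact ⟨(i', j'), by
          rw [Finset.mem_coe, Finset.mem_filter]; exact ⟨Finset.mem_univ _, hj'⟩, rfl⟩
      have htot : ((Finset.univ.filter fun q : Fin (h * w) × Fin (h * w) =>
          S q.1 q.2 = some k).card : ℝ) ≤ h * (ε * w) := by
        apply occ_le _ (fun q => (q.2 : ℕ) / w) h
        · intro q _
          exact Nat.div_lt_of_lt_mul (lt_of_lt_of_eq q.2.2 (Nat.mul_comm h w))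
        · intro p hp
          have hset : ((Finset.univ.filter fun q : Fin (h * w) × Fin (h * w) =>
              S q.1 q.2 = some k).filter fun q => (q.2 : ℕ) / w = p)
              = Finset.univ.filter fun q : Fin (h * w) × Fin (h * w) =>
                (q.2 : ℕ) / w = p ∧ S q.1 q.2 = some k := by
            rw [Finset.filter_filter]
            ext q
            simp only [Finset.mem_filter, Finset.mem_univ, true_and]
            tauto
          rw [hset]
          exact hsymcol k p hp
      calc (B2.card : ℝ) ≤ ((Finset.univ.filter fun q : Fin (h * w) × Fin (h * w) =>
            S q.1 q.2 = some k).card : ℝ) := by exact_mod_cast key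
        _ ≤ h * (ε * w) := htot
        _ = ε * ((h : ℝ) * w) := by ring
    have hb3 : (B3.card : ℝ) ≤ ε * (h * w) := by
      have key : B3.card ≤ (Finset.univ.filter fun q : Fin (h * w) × Fin (h * w) =>
          (q.2 : ℕ) / w = (j : ℕ) / w ∧ S q.1 q.2 = some k).card * h := by
        apply card_le_biUnion_bound _ _ (fun q : Fin (h * w) × Fin (h * w) =>
          Finset.univ.filter fun i' : Fin (h * w) => (i' : ℕ) / h = (q.1 : ℕ) / h) h
        · intro i' hi'
          rw [hB3, Finset.mem_filter] at hi'
          obtain ⟨i'', j'', he, hs⟩ := hi'.2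
          rw [box0_eq_iff h w hh0] at he
          refine Finset.mem_biUnion.2 ⟨(i'', j''), ?_, ?_⟩
          · exact Finset.mem_filter.2 ⟨Finset.mem_univ _, he.2, hs⟩
          · exact Finset.mem_filter.2 ⟨Finset.mem_univ _, he.1.symm⟩
        · intro q _
          exact fiber_card_le (h * w) h _ hh0
      have hU := hsymcol k ((j : ℕ) / w) hjb
      have key' : (B3.card : ℝ) ≤ ((Finset.univ.filter fun q : Fin (h * w) × Fin (h * w) =>
          (q.2 : ℕ) / w = (j : ℕ) / w ∧ S q.1 q.2 = some k).card : ℝ) * h := by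
        exact_mod_cast key
      calc (B3.card : ℝ) ≤ _ := key'
        _ ≤ (ε * w) * h := by
          apply mul_le_mul_of_nonneg_right hU (by positivity)
        _ = ε * ((h : ℝ) * w) := by ring
    have hsplit := Finset.card_filter_add_card_filter_not
      (s := (Finset.univ : Finset (Fin (h * w)))) (p := fun i' => FreeTile h w S i' j k)
    have hbadsub : (Finset.univ.filter fun i' : Fin (h * w) => ¬ FreeTile h w S i' j k)
        ⊆ B1 ∪ B2 ∪ B3 := by
      intro i' hi'
      have hf : ¬ FreeTile h w S i' j k := (Finset.mem_filter.1 hi').2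
      rw [Finset.mem_union, Finset.mem_union, hB1, hB2, hB3]
      simp only [Finset.mem_filter, Finset.mem_univ, true_and]
      by_contra hcon
      push_neg at hcon
      obtain ⟨⟨h1, h2⟩, h3⟩ := hcon
      exact hf ⟨h1, h2, hk, h3⟩
    have hbad : (Finset.univ.filter fun i' : Fin (h * w) => ¬ FreeTile h w S i' j k).card
        ≤ B1.card + B2.card + B3.card :=
      le_trans (Finset.card_le_card hbadsub)
        (le_trans (Finset.card_union_le _ _)
          (add_le_add_left (Finset.card_union_le _ _) _))
    have e1 : (Finset.univ.filter fun i' : Fin (h * w) => FreeTile h w S i' j k).card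
        + (Finset.univ.filter fun i' : Fin (h * w) => ¬ FreeTile h w S i' j k).card = h * w := by
      rw [hsplit, Finset.card_univ, Fintype.card_fin]
    have e2 : (h : ℝ) * w ≤
        ((Finset.univ.filter fun i' => FreeTile h w S i' j k).card : ℝ)
        + ((B1.card : ℝ) + B2.card + B3.card) := by
      have hc : ((Finset.univ.filter fun i' : Fin (h * w) => FreeTile h w S i' j k).card : ℝ)
          + ((Finset.univ.filter fun i' : Fin (h * w) => ¬ FreeTile h w S i' j k).card : ℝ)
          = (h : ℝ) * w := by exact_mod_cast congrArg (Nat.cast : ℕ → ℝ) e1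
      have hb : ((Finset.univ.filter fun i' : Fin (h * w) => ¬ FreeTile h w S i' j k).card : ℝ)
          ≤ (B1.card : ℝ) + B2.card + B3.card := by exact_mod_cast hbad
      linarith
    have e3 : (1 - 3 * ε) * ((h : ℝ) * w) = (h : ℝ) * w - 3 * (ε * ((h : ℝ) * w)) := by ring
    linarith
  · -- box-symbol edges
    intro l k hk
    have hl1 : (l : ℕ) / h < w := Nat.div_lt_of_lt_mul l.2
    have hl2 : (l : ℕ) % h < h := Nat.mod_lt _ hh0
    have hmem1 : ∀ p : Fin (h * w) × Fin (h * w), box0 h w p.1 p.2 = l →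
        (p.1 : ℕ) / h = (l : ℕ) / h := by
      intro p hp
      have hv := congrArg Fin.val hp
      rw [← hv]
      exact (box0_div h w hh0 p.1 p.2).symm
    have hmem2 : ∀ p : Fin (h * w) × Fin (h * w), box0 h w p.1 p.2 = l →
        (p.2 : ℕ) / w = (l : ℕ) % h := by
      intro p hp
      have hv := congrArg Fin.val hp
      rw [← hv]
      exact (box0_mod h w p.1 p.2).symm
    have hbox0eq : ∀ x y : Fin (h * w), (x : ℕ) / h = (l : ℕ) / h →
        (y : ℕ) / w = (l : ℕ) % h → box0 h w x y = l := by
      intro x y e1 e2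
      apply Fin.ext
      show h * ((x : ℕ) / h) + (y : ℕ) / w = (l : ℕ)
      rw [e1, e2, Nat.div_add_mod]
    set Box := Finset.univ.filter
      (fun p : Fin (h * w) × Fin (h * w) => box0 h w p.1 p.2 = l) with hBox
    have hboxcard : h * w ≤ Box.card := by
      have key : (Finset.univ : Finset (Fin (h * w))).card ≤ Box.card := by
        apply Finset.card_le_card_of_injOn (fun m : Fin (h * w) =>
        ((⟨h * ((l : ℕ) / h) + (m : ℕ) % h, by
            have hm : (m : ℕ) % h < h := Nat.mod_lt _ hh0
            have ha : h * ((l : ℕ) / h + 1) ≤ h * w := Nat.mul_le_mul_left h hl1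
            have hb : h * ((l : ℕ) / h + 1) = h * ((l : ℕ) / h) + h := by ring
            omega⟩ : Fin (h * w)),
         (⟨w * ((l : ℕ) % h) + (m : ℕ) / h, by
            have hm : (m : ℕ) / h < w := Nat.div_lt_of_lt_mul m.2
            have ha : w * ((l : ℕ) % h + 1) ≤ w * h := Nat.mul_le_mul_left w hl2
            have hb : w * ((l : ℕ) % h + 1) = w * ((l : ℕ) % h) + w := by ring
            have hc : w * h = h * w := Nat.mul_comm w h
            omega⟩ : Fin (h * w))))
        · intro m _
          rw [hBox, Finset.mem_coe, Finset.mem_filter]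
          refine ⟨Finset.mem_univ _, ?_⟩
          apply hbox0eq
          · show (h * ((l : ℕ) / h) + (m : ℕ) % h) / h = (l : ℕ) / h
            rw [Nat.mul_add_div hh0, Nat.div_eq_of_lt (Nat.mod_lt _ hh0), Nat.add_zero]
          · show (w * ((l : ℕ) % h) + (m : ℕ) / h) / w = (l : ℕ) % h
            have hm : (m : ℕ) / h < w := Nat.div_lt_of_lt_mul m.2
            rw [Nat.mul_add_div hw0, Nat.div_eq_of_lt hm, Nat.add_zero]
        · intro x _ y _ hxy
          have e1 : h * ((l : ℕ) / h) + (x : ℕ) % h = h * ((l : ℕ) / h) + (y : ℕ) % h := by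
            have := congrArg (fun p : Fin (h * w) × Fin (h * w) => (p.1 : ℕ)) hxy
            simpa using this
          have e2 : w * ((l : ℕ) % h) + (x : ℕ) / h = w * ((l : ℕ) % h) + (y : ℕ) / h := by
            have := congrArg (fun p : Fin (h * w) × Fin (h * w) => (p.2 : ℕ)) hxy
            simpa using this
          have d1 := Nat.div_add_mod (x : ℕ) h
          have d2 := Nat.div_add_mod (y : ℕ) h
          have e3 : (x : ℕ) / h = (y : ℕ) / h := by omega
          rw [e3] at d1
          exact Fin.ext (by omega)
      rw [Finset.card_univ, Fintype.card_fin] at key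
      exact key
    set B1 := Finset.univ.filter (fun p : Fin (h * w) × Fin (h * w) =>
      box0 h w p.1 p.2 = l ∧ S p.1 p.2 ≠ none) with hB1
    set B2 := Finset.univ.filter (fun p : Fin (h * w) × Fin (h * w) =>
      box0 h w p.1 p.2 = l ∧ ∃ j', S p.1 j' = some k) with hB2
    set B3 := Finset.univ.filter (fun p : Fin (h * w) × Fin (h * w) =>
      box0 h w p.1 p.2 = l ∧ ∃ i', S i' p.2 = some k) with hB3
    have hb1 : (B1.card : ℝ) ≤ ε * (h * w) := by rw [hB1]; exact hbox l
    have hb2 : (B2.card : ℝ) ≤ ε * (h * w) := by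
      have key : B2.card ≤ (Finset.univ.filter fun q : Fin (h * w) × Fin (h * w) =>
          (q.1 : ℕ) / h = (l : ℕ) / h ∧ S q.1 q.2 = some k).card * w := by
        apply card_le_biUnion_bound _ _ (fun q : Fin (h * w) × Fin (h * w) =>
          Finset.univ.filter fun p : Fin (h * w) × Fin (h * w) =>
            p.1 = q.1 ∧ box0 h w p.1 p.2 = l) w
        · intro p hp
          rw [hB2, Finset.mem_filter] at hp
          obtain ⟨hbl, j', hj'⟩ := hp.2
          refine Finset.mem_biUnion.2 ⟨(p.1, j'), ?_, ?_⟩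
          · exact Finset.mem_filter.2 ⟨Finset.mem_univ _, hmem1 p hbl, hj'⟩
          · exact Finset.mem_filter.2 ⟨Finset.mem_univ _, rfl, hbl⟩
        · intro q _
          have key2 : (Finset.univ.filter fun p : Fin (h * w) × Fin (h * w) =>
              p.1 = q.1 ∧ box0 h w p.1 p.2 = l).card
              ≤ (Finset.univ : Finset (Fin w)).card := by
            apply Finset.card_le_card_of_injOn
              (fun p => ⟨(p.2 : ℕ) % w, Nat.mod_lt _ hw0⟩)
            · intro p _; exact Finset.mem_univ _
            · intro p hp p' hp' hpe
              rw [Finset.mem_coe, Finset.mem_filter] at hp hp'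
              have hv : (p.2 : ℕ) % w = (p'.2 : ℕ) % w := by
                simpa using congrArg Fin.val hpe
              have u1 : (p.2 : ℕ) / w = (l : ℕ) % h := hmem2 p hp.2.2
              have u2 : (p'.2 : ℕ) / w = (l : ℕ) % h := hmem2 p' hp'.2.2
              have d1 := Nat.div_add_mod (p.2 : ℕ) w
              have d2 := Nat.div_add_mod (p'.2 : ℕ) w
              rw [u1] at d1
              rw [u2] at d2
              have h2 : p.2 = p'.2 := Fin.ext (by omega)
              have h1 : p.1 = p'.1 := hp.2.1.trans hp'.2.1.symm
              exact Prod.ext h1 h2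
          simpa using key2
      have hU := hsymrow k ((l : ℕ) / h) hl1
      have key' : (B2.card : ℝ) ≤ ((Finset.univ.filter fun q : Fin (h * w) × Fin (h * w) =>
          (q.1 : ℕ) / h = (l : ℕ) / h ∧ S q.1 q.2 = some k).card : ℝ) * w := by
        exact_mod_cast key
      calc (B2.card : ℝ) ≤ _ := key'
        _ ≤ (ε * h) * w := by
          apply mul_le_mul_of_nonneg_right hU (by positivity)
        _ = ε * ((h : ℝ) * w) := by ring
    have hb3 : (B3.card : ℝ) ≤ ε * (h * w) := by
      have key : B3.card ≤ (Finset.univ.filter fun q : Fin (h * w) × Fin (h * w) =>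
          (q.2 : ℕ) / w = (l : ℕ) % h ∧ S q.1 q.2 = some k).card * h := by
        apply card_le_biUnion_bound _ _ (fun q : Fin (h * w) × Fin (h * w) =>
          Finset.univ.filter fun p : Fin (h * w) × Fin (h * w) =>
            p.2 = q.2 ∧ box0 h w p.1 p.2 = l) h
        · intro p hp
          rw [hB3, Finset.mem_filter] at hp
          obtain ⟨hbl, i', hi'⟩ := hp.2
          refine Finset.mem_biUnion.2 ⟨(i', p.2), ?_, ?_⟩
          · exact Finset.mem_filter.2 ⟨Finset.mem_univ _, hmem2 p hbl, hi'⟩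
          · exact Finset.mem_filter.2 ⟨Finset.mem_univ _, rfl, hbl⟩
        · intro q _
          have key2 : (Finset.univ.filter fun p : Fin (h * w) × Fin (h * w) =>
              p.2 = q.2 ∧ box0 h w p.1 p.2 = l).card
              ≤ (Finset.univ : Finset (Fin h)).card := by
            apply Finset.card_le_card_of_injOn
              (fun p => ⟨(p.1 : ℕ) % h, Nat.mod_lt _ hh0⟩)
            · intro p _; exact Finset.mem_univ _
            · intro p hp p' hp' hpe
              rw [Finset.mem_coe, Finset.mem_filter] at hp hp'
              have hv : (p.1 : ℕ) % h = (p'.1 : ℕ) % h := by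
                simpa using congrArg Fin.val hpe
              have u1 : (p.1 : ℕ) / h = (l : ℕ) / h := hmem1 p hp.2.2
              have u2 : (p'.1 : ℕ) / h = (l : ℕ) / h := hmem1 p' hp'.2.2
              have d1 := Nat.div_add_mod (p.1 : ℕ) h
              have d2 := Nat.div_add_mod (p'.1 : ℕ) h
              rw [u1] at d1
              rw [u2] at d2
              have h1 : p.1 = p'.1 := Fin.ext (by omega)
              have h2 : p.2 = p'.2 := hp.2.1.trans hp'.2.1.symm
              exact Prod.ext h1 h2
          simpa using key2
      have hU := hsymcol k ((l : ℕ) % h) hl2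
      have key' : (B3.card : ℝ) ≤ ((Finset.univ.filter fun q : Fin (h * w) × Fin (h * w) =>
          (q.2 : ℕ) / w = (l : ℕ) % h ∧ S q.1 q.2 = some k).card : ℝ) * h := by
        exact_mod_cast key
      calc (B3.card : ℝ) ≤ _ := key'
        _ ≤ (ε * w) * h := by
          apply mul_le_mul_of_nonneg_right hU (by positivity)
        _ = ε * ((h : ℝ) * w) := by ring
    have hsplit := Finset.card_filter_add_card_filter_not
      (s := Box) (p := fun p : Fin (h * w) × Fin (h * w) => FreeTile h w S p.1 p.2 k)
    have hgood : Box.filter (fun p : Fin (h * w) × Fin (h * w) => FreeTile h w S p.1 p.2 k)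
        = Finset.univ.filter fun p : Fin (h * w) × Fin (h * w) =>
            box0 h w p.1 p.2 = l ∧ FreeTile h w S p.1 p.2 k := by
      rw [hBox]
      ext p
      simp only [Finset.mem_filter, Finset.mem_univ, true_and, and_assoc]
    have hbadsub : (Box.filter fun p : Fin (h * w) × Fin (h * w) =>
        ¬ FreeTile h w S p.1 p.2 k) ⊆ B1 ∪ B2 ∪ B3 := by
      intro p hp
      rw [Finset.mem_filter, hBox, Finset.mem_filter] at hp
      obtain ⟨⟨_, hbl⟩, hnf⟩ := hp
      rw [Finset.mem_union, Finset.mem_union, hB1, hB2, hB3]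
      simp only [Finset.mem_filter, Finset.mem_univ, true_and]
      by_contra hcon
      push_neg at hcon
      obtain ⟨⟨h1, h2⟩, h3⟩ := hcon
      exact hnf ⟨h1 hbl, h2 hbl, h3 hbl, fun i' j' he => hk i' j' (he.trans hbl)⟩
    have hbad : (Box.filter fun p : Fin (h * w) × Fin (h * w) =>
        ¬ FreeTile h w S p.1 p.2 k).card ≤ B1.card + B2.card + B3.card :=
      le_trans (Finset.card_le_card hbadsub)
        (le_trans (Finset.card_union_le _ _)
          (add_le_add_left (Finset.card_union_le _ _) _))
    have e1 : h * w ≤ (Finset.univ.filter fun p : Fin (h * w) × Fin (h * w) =>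
        box0 h w p.1 p.2 = l ∧ FreeTile h w S p.1 p.2 k).card
        + (B1.card + B2.card + B3.card) := by
      rw [← hgood]
      omega
    have e2 : (h : ℝ) * w ≤
        ((Finset.univ.filter fun p : Fin (h * w) × Fin (h * w) =>
          box0 h w p.1 p.2 = l ∧ FreeTile h w S p.1 p.2 k).card : ℝ)
        + ((B1.card : ℝ) + B2.card + B3.card) := by exact_mod_cast e1
    have e3 : (1 - 3 * ε) * ((h : ℝ) * w) = (h : ℝ) * w - 3 * (ε * ((h : ℝ) * w)) := by ring
    linarith
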